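/- Let n be a positive integer and let f : {0,1}^n → ℝ be any function. Then there exist a natural number m and a multilinear polynomial g of degree at most 2 in n + m variables such that for every x ∈ {0,1}^n: min over a ∈ {0,1}^m of g(x, a) = f(x). -/

import Mathlib

def b2r (b : Bool) : ℝ := if b then 1 else 0

def IsMultilinearDeg (d n : ℕ) (g : (Fin n → ℝ) → ℝ) : Prop :=
  ∃ c : Finset (Fin n) → ℝ, (∀ S, d < S.card → c S = 0) ∧
    ∀ v, g v = ∑ S : Finset (Fin n), c S * ∏ i ∈ S, v i

namespace MLaux

lemma ml_congr {d n : ℕ} {g g' : (Fin n → ℝ) → ℝ} (h : ∀ v, g v = g' v)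
    (h' : IsMultilinearDeg d n g') : IsMultilinearDeg d n g := by
  obtain ⟨c, h0, h1⟩ := h'
  exact ⟨c, h0, fun v => (h v).trans (h1 v)⟩

lemma ml_const (d n : ℕ) (r : ℝ) : IsMultilinearDeg d n (fun _ => r) := by
  refine ⟨fun S => if S = ∅ then r else 0, ?_, ?_⟩
  · intro S h
    dsimp only; rw [if_neg]; rintro rfl; simp at h
  · intro v
    simp [ite_mul, Finset.sum_ite_eq']

lemma ml_add {d n : ℕ} {g g' : (Fin n → ℝ) → ℝ} (h : IsMultilinearDeg d n g)
    (h' : IsMultilinearDeg d n g') : IsMultilinearDeg d n (fun v => g v + g' v) := by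
  obtain ⟨c, h0, h1⟩ := h
  obtain ⟨c', h0', h1'⟩ := h'
  refine ⟨fun S => c S + c' S, fun S hS => by dsimp only; rw [h0 S hS, h0' S hS]; ring, fun v => ?_⟩
  simp only [h1 v, h1' v, add_mul, Finset.sum_add_distrib]

lemma ml_smul {d n : ℕ} (r : ℝ) {g : (Fin n → ℝ) → ℝ} (h : IsMultilinearDeg d n g) :
    IsMultilinearDeg d n (fun v => r * g v) := by
  obtain ⟨c, h0, h1⟩ := h
  refine ⟨fun S => r * c S, fun S hS => by dsimp only; rw [h0 S hS]; ring, fun v => ?_⟩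
  simp only [h1 v, Finset.mul_sum, mul_assoc]

lemma ml_sum {d n : ℕ} {ι : Type*} (s : Finset ι) (F : ι → (Fin n → ℝ) → ℝ)
    (h : ∀ i ∈ s, IsMultilinearDeg d n (F i)) :
    IsMultilinearDeg d n (fun v => ∑ i ∈ s, F i v) := by
  classical
  induction s using Finset.induction_on with
  | empty => exact ml_congr (by simp) (ml_const d n 0)
  | insert _ _ hx ih =>
    rename_i a s
    refine ml_congr (fun v => Finset.sum_insert hx) ?_
    exact ml_add (h a (Finset.mem_insert_self a s))
      (ih fun i hi => h i (Finset.mem_insert_of_mem hi))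

lemma ml_coord {n : ℕ} (i : Fin n) : IsMultilinearDeg 2 n (fun v => v i) := by
  refine ⟨fun S => if S = {i} then 1 else 0, ?_, ?_⟩
  · intro S h
    dsimp only; rw [if_neg]; rintro rfl; simp at h
  · intro v
    simp [ite_mul, Finset.sum_ite_eq']

lemma ml_prod2 {n : ℕ} (i j : Fin n) (hij : i ≠ j) :
    IsMultilinearDeg 2 n (fun v => v i * v j) := by
  refine ⟨fun S => if S = {i, j} then 1 else 0, ?_, ?_⟩
  · intro S h
    dsimp only; rw [if_neg]; rintro rfl
    have : ({i, j} : Finset (Fin n)).card ≤ 2 := Finset.card_insert_le _ _ |>.trans (by simp)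
    omega
  · intro v
    simp [ite_mul, Finset.sum_ite_eq', Finset.prod_pair hij]

end MLaux

open MLaux in
theorem diagonal_hamiltonian_two_local_reduction
    (n : ℕ) (hn : 0 < n) (f : (Fin n → Bool) → ℝ) :
    ∃ (m : ℕ) (g : (Fin (n + m) → ℝ) → ℝ),
      IsMultilinearDeg 2 (n + m) g ∧
      ∀ x : Fin n → Bool,
        IsLeast {r : ℝ | ∃ a : Fin m → Bool,
            g (Fin.append (fun i => b2r (x i)) (fun j => b2r (a j))) = r}
          (f x) := by
  classical
  set m := Fintype.card (Fin n → Bool) with hm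
  let e : (Fin n → Bool) ≃ Fin m := Fintype.equivFin (Fin n → Bool)
  let C : ℝ := ∑ y : Fin n → Bool, |f y|
  let d : (Fin n → Bool) → ℝ := fun y => C - f y
  have hd : ∀ y, 0 ≤ d y := by
    intro y
    have h1 : f y ≤ |f y| := le_abs_self _
    have h2 : |f y| ≤ C :=
      Finset.single_le_sum (fun z _ => abs_nonneg (f z)) (Finset.mem_univ y)
    simp only [d]; linarith
  let iy : (Fin n → Bool) → Fin (n + m) := fun y => Fin.natAdd n (e y)
  let ci : Fin n → Fin (n + m) := fun i => Fin.castAdd m i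
  have hne : ∀ y i, iy y ≠ ci i := by
    intro y i
    simp only [iy, ci, Fin.ne_iff_vne, Fin.coe_natAdd, Fin.coe_castAdd]
    have := i.isLt
    omega
  let g : (Fin (n + m) → ℝ) → ℝ := fun v =>
    C + ∑ y : Fin n → Bool, d y * (v (iy y) *
      (((n : ℝ) - 1) - ∑ i : Fin n, (if y i then v (ci i) else 1 - v (ci i))))
  refine ⟨m, g, ?_, ?_⟩
  · -- multilinearity
    apply ml_congr (g' := fun v =>
      C + ∑ y : Fin n → Bool, ((d y * ((n : ℝ) - 1)) * v (iy y) +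
        ∑ i : Fin n, (if y i then (-(d y)) * (v (iy y) * v (ci i))
          else ((-(d y)) * v (iy y) + d y * (v (iy y) * v (ci i))))))
    · intro v
      simp only [g]
      congr 1
      refine Finset.sum_congr rfl fun y _ => ?_
      have h1 : (∑ i : Fin n, (if y i then (-(d y)) * (v (iy y) * v (ci i))
          else ((-(d y)) * v (iy y) + d y * (v (iy y) * v (ci i)))))
          = ∑ i : Fin n, (-(d y)) * (v (iy y) * (if y i then v (ci i) else 1 - v (ci i))) := by
        refine Finset.sum_congr rfl fun i _ => ?_
        cases hyi : y i <;> simp [hyi] <;> ring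
      rw [h1, ← Finset.mul_sum, ← Finset.mul_sum]
      ring
    · refine ml_add (ml_const 2 (n + m) C) ?_
      refine ml_sum _ _ fun y _ => ?_
      refine ml_add (ml_smul _ (ml_coord (iy y))) ?_
      refine ml_sum _ _ fun i _ => ?_
      cases hyi : y i
      · simp only [Bool.false_eq_true, if_false]
        exact ml_add (ml_smul _ (ml_coord (iy y))) (ml_smul _ (ml_prod2 _ _ (hne y i)))
      · simp only [if_true]
        exact ml_smul _ (ml_prod2 _ _ (hne y i))
  · -- IsLeast
    intro x
    have hb0 : ∀ b : Bool, 0 ≤ b2r b := by intro b; cases b <;> simp [b2r]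
    have hb1 : ∀ b : Bool, b2r b ≤ 1 := by intro b; cases b <;> simp [b2r]
    -- evaluation of g on boolean inputs
    set Sfun : (Fin n → Bool) → ℝ :=
      fun y => ∑ i : Fin n, (if x i = y i then (1 : ℝ) else 0) with hSfun
    have hv : ∀ a : Fin m → Bool,
        g (Fin.append (fun i => b2r (x i)) (fun j => b2r (a j)))
          = C + ∑ y : Fin n → Bool, d y * (b2r (a (e y)) * (((n : ℝ) - 1) - Sfun y)) := by
      intro a
      simp only [g]
      congr 1
      refine Finset.sum_congr rfl fun y _ => ?_
      have happ1 : ∀ i : Fin n,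
          Fin.append (fun i => b2r (x i)) (fun j => b2r (a j)) (ci i) = b2r (x i) :=
        fun i => Fin.append_left _ _ i
      have happ2 : Fin.append (fun i => b2r (x i)) (fun j => b2r (a j)) (iy y)
          = b2r (a (e y)) := Fin.append_right _ _ (e y)
      rw [happ2]
      have hsum : (∑ i : Fin n, if y i = true
            then Fin.append (fun i => b2r (x i)) (fun j => b2r (a j)) (ci i)
            else 1 - Fin.append (fun i => b2r (x i)) (fun j => b2r (a j)) (ci i)) = Sfun y := by
        refine Finset.sum_congr rfl fun i _ => ?_
        rw [happ1 i]
        cases hyi : y i <;> cases hxi : x i <;> simp [b2r, hyi, hxi]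
      rw [hsum]
    have hSx : Sfun x = (n : ℝ) := by simp [hSfun]
    have hSle : ∀ y, y ≠ x → Sfun y ≤ (n : ℝ) - 1 := by
      intro y hyx
      have hcard : Sfun y = ((Finset.univ.filter (fun i => x i = y i)).card : ℝ) := by
        simp [hSfun, Finset.sum_boole]
      obtain ⟨i0, hi0⟩ : ∃ i, x i ≠ y i := by
        by_contra h
        push_neg at h
        exact hyx (funext fun i => (h i).symm)
      have hss : (Finset.univ.filter (fun i => x i = y i)) ⊂ Finset.univ := by
        refine Finset.ssubset_iff_of_subset (Finset.filter_subset _ _) |>.mpr ?_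
        exact ⟨i0, Finset.mem_univ _, by simp [hi0]⟩
      have hlt : (Finset.univ.filter (fun i => x i = y i)).card < n := by
        have := Finset.card_lt_card hss
        simpa using this
      rw [hcard]
      have : ((Finset.univ.filter (fun i => x i = y i)).card : ℝ) + 1 ≤ (n : ℝ) := by
        exact_mod_cast hlt
      linarith
    constructor
    · -- membership
      refine ⟨fun j => decide (e.symm j = x), ?_⟩
      rw [hv]
      have hterm : ∀ y : Fin n → Bool,
          d y * (b2r (decide (e.symm (e y) = x)) * (((n : ℝ) - 1) - Sfun y))
            = if y = x then -(d x) else 0 := by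
        intro y
        rw [Equiv.symm_apply_apply]
        by_cases hyx : y = x
        · subst hyx
          have hb : b2r (decide (y = y)) = 1 := by simp [b2r]
          rw [if_pos rfl, hb, hSx]; ring
        · have hb : b2r (decide (y = x)) = 0 := by simp [b2r, hyx]
          rw [if_neg hyx, hb]; ring
      simp only [hterm]
      rw [Finset.sum_ite_eq' Finset.univ x (fun _ => -(d x))]
      simp only [Finset.mem_univ, if_true, d]
      ring
    · -- lower bound
      rintro r ⟨a, rfl⟩
      rw [hv a]
      have hterm : ∀ y : Fin n → Bool,
          (if y = x then -(d x) else 0)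
            ≤ d y * (b2r (a (e y)) * (((n : ℝ) - 1) - Sfun y)) := by
        intro y
        by_cases hyx : y = x
        · subst hyx
          simp only [if_true, hSx]
          nlinarith [hd y, hb0 (a (e y)), hb1 (a (e y))]
        · simp only [hyx, if_false]
          have h1 : (0 : ℝ) ≤ ((n : ℝ) - 1) - Sfun y := by
            have := hSle y hyx; linarith
          exact mul_nonneg (hd y) (mul_nonneg (hb0 _) h1)
      have hsum : (∑ y : Fin n → Bool, (if y = x then -(d x) else 0))
          ≤ ∑ y : Fin n → Bool, d y * (b2r (a (e y)) * (((n : ℝ) - 1) - Sfun y)) :=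
        Finset.sum_le_sum fun y _ => hterm y
      rw [Finset.sum_ite_eq' Finset.univ x (fun _ => -(d x))] at hsum
      simp only [Finset.mem_univ, if_true, d] at hsum
      simp only [d]
      linarith
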